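/- arXiv:2009.01461 — 4 statements merged into one kernel-verified Lean document; each statement's English description precedes it below -/
import Mathlib

section
/- Let n ≥ 1 and k ≥ 1 be natural numbers. Let f : ℝ^n → ℝ be continuously differentiable with support contained in [-1,1]^n. Then for every x ∈ [-1,1]^n, the error of the quasi-interpolant satisfies |f(x) - Σ_{i ∈ Z_k^n} f(i/k) · g_n(k·x - i)| ≤ (max_{j=1,…,n} ‖∂_{x_j} f‖_∞) · n/(2k), where the sum runs over all integer vectors i = (i_1,…,i_n) with each |i_j| ≤ k, i/k denotes the point (i_1/k,…,i_n/k), and ‖·‖_∞ denotes the supremum norm over ℝ^n. -/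
/-- The tent function `g₁(x) = max{1 - |x|, 0}`. -/
noncomputable def g1 (x : ℝ) : ℝ := max (1 - |x|) 0

/-- The product tent function `gₙ(x) = ∏ⱼ g₁(xⱼ)`. -/
noncomputable def gn {n : ℕ} (x : Fin n → ℝ) : ℝ := ∏ j, g1 (x j)

lemma g1_nonneg (x : ℝ) : 0 ≤ g1 x := le_max_right _ _

lemma g1_of_one_le {x : ℝ} (h : 1 ≤ |x|) : g1 x = 0 := max_eq_right (by linarith)

lemma g1_of_le_one {x : ℝ} (h : |x| ≤ 1) : g1 x = 1 - |x| := max_eq_left (by linarith)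

/-- Reduce a sum of terms supported on `|t - a| < 1` to the two nearest integers. -/
lemma sum_two (k : ℕ) (t : ℝ) (ht : -(k:ℝ) ≤ t) (ht' : t ≤ k) (F : ℤ → ℝ)
    (hF0 : ∀ a : ℤ, 1 ≤ |t - a| → F a = 0) :
    ∑ a ∈ Finset.Icc (-(k:ℤ)) k, F a = F ⌊t⌋ + F (⌊t⌋ + 1) := by
  set m := ⌊t⌋ with hm
  have hmle : (m:ℝ) ≤ t := Int.floor_le t
  have hmlt : t < (m:ℝ) + 1 := Int.lt_floor_add_one t
  have hmem : ∀ a : ℤ, F a ≠ 0 → a = m ∨ a = m + 1 := by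
    intro a ha
    by_contra hcon
    push_neg at hcon
    apply ha; apply hF0
    have h2 : a ≤ m - 1 ∨ m + 2 ≤ a := by omega
    rw [le_abs]
    rcases h2 with h | h
    · left
      have h3 : (a:ℝ) ≤ (m:ℝ) - 1 := by exact_mod_cast h
      linarith
    · right
      have h3 : (m:ℝ) + 2 ≤ (a:ℝ) := by exact_mod_cast h
      linarith
  have hmk : m ≤ (k:ℤ) := by
    have : (m:ℝ) ≤ (k:ℝ) := le_trans hmle ht'
    exact_mod_cast this
  have hmS : m ∈ Finset.Icc (-(k:ℤ)) k := by
    rw [Finset.mem_Icc]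
    exact ⟨(Int.le_floor).2 (by push_cast; linarith), hmk⟩
  have key : ∑ a ∈ Finset.Icc (-(k:ℤ)) k, F a = ∑ a ∈ ({m, m + 1} : Finset ℤ), F a := by
    rw [← Finset.sum_filter_of_ne (p := fun a => a ∈ ({m, m+1} : Finset ℤ))
      (fun a _ ha => by simpa using hmem a ha)]
    apply Finset.sum_subset
    · intro a ha
      exact (Finset.mem_filter.1 ha).2
    · intro a ha ha2
      by_contra hne
      apply ha2
      rw [Finset.mem_filter]
      refine ⟨?_, ha⟩
      rcases hmem a hne with rfl | rfl
      · exact hmS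
      · rw [Finset.mem_Icc]
        constructor
        · have := (Finset.mem_Icc.1 hmS).1; omega
        · -- if m + 1 > k then m = k, t = k, then F (m+1) = 0, contradiction
          by_contra hgt
          push_neg at hgt
          have hmk2 : m = (k:ℤ) := by omega
          have htk : t = (k:ℝ) := le_antisymm ht' (by rw [hmk2] at hmle; exact_mod_cast hmle)
          apply hne
          apply hF0
          rw [htk, hmk2]
          push_cast
          rw [show ((k:ℝ) - ((k:ℝ)+1)) = -1 by ring]
          simp
  rw [key, Finset.sum_pair (by omega)]

lemma sum_g1_eq_one (k : ℕ) (t : ℝ) (ht : -(k:ℝ) ≤ t) (ht' : t ≤ k) :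
    ∑ a ∈ Finset.Icc (-(k:ℤ)) k, g1 (t - a) = 1 := by
  rw [sum_two k t ht ht' _ (fun a ha => g1_of_one_le ha)]
  set m := ⌊t⌋ with hm
  have hmle : (m:ℝ) ≤ t := Int.floor_le t
  have hmlt : t < (m:ℝ) + 1 := Int.lt_floor_add_one t
  have h1 : |t - (m:ℝ)| = t - m := abs_of_nonneg (by linarith)
  have h2 : |t - ((m:ℝ) + 1)| = (m:ℝ) + 1 - t := by rw [abs_sub_comm]; exact abs_of_nonneg (by linarith)
  rw [g1_of_le_one (by rw [h1]; linarith), g1_of_le_one (by push_cast; rw [h2]; push_cast; linarith)]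
  push_cast
  rw [h1]
  rw [show t - ((m:ℝ) + 1) = -(((m:ℝ)+1) - t) by ring, abs_neg, abs_of_nonneg (by linarith)]
  ring

lemma sum_g1_weight (k : ℕ) (t : ℝ) (ht : -(k:ℝ) ≤ t) (ht' : t ≤ k) :
    ∑ a ∈ Finset.Icc (-(k:ℤ)) k, g1 (t - a) * |t - a| ≤ 1 / 2 := by
  rw [sum_two k t ht ht' _ (fun a ha => by rw [g1_of_one_le ha, zero_mul])]
  set m := ⌊t⌋ with hm
  have hmle : (m:ℝ) ≤ t := Int.floor_le t
  have hmlt : t < (m:ℝ) + 1 := Int.lt_floor_add_one t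
  have h1 : |t - (m:ℝ)| = t - m := abs_of_nonneg (by linarith)
  have h2 : |t - ((m:ℝ) + 1)| = (m:ℝ) + 1 - t := by
    rw [abs_sub_comm]; exact abs_of_nonneg (by linarith)
  rw [g1_of_le_one (by rw [h1]; linarith), g1_of_le_one (by push_cast; rw [h2]; linarith)]
  push_cast
  rw [h1, h2]
  nlinarith [sq_nonneg (t - m - 1/2)]

lemma mvt_bound {n : ℕ} (f : (Fin n → ℝ) → ℝ) (hf : ContDiff ℝ 1 f) (C : ℝ)
    (hC : ∀ (j : Fin n) (z : Fin n → ℝ), |fderiv ℝ f z (Pi.single j 1)| ≤ C)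
    (x y : Fin n → ℝ) : |f x - f y| ≤ C * ∑ j, |x j - y j| := by
  have hd : Differentiable ℝ f := hf.differentiable one_ne_zero
  have hdir : ∀ (z : Fin n → ℝ) (v : Fin n → ℝ),
      |fderiv ℝ f z v| ≤ C * ∑ j, |v j| := by
    intro z v
    have hv : v = ∑ j, v j • (Pi.single j 1 : Fin n → ℝ) := by
      funext i
      rw [Finset.sum_apply]
      simp [Pi.single_apply]
    calc |fderiv ℝ f z v| = |∑ j, v j * fderiv ℝ f z (Pi.single j 1)| := by
          conv_lhs => rw [hv]
          rw [map_sum]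
          simp [smul_eq_mul]
      _ ≤ ∑ j, |v j * fderiv ℝ f z (Pi.single j 1)| := Finset.abs_sum_le_sum_abs _ _
      _ ≤ ∑ j, |v j| * C := by
          refine Finset.sum_le_sum fun j _ => ?_
          rw [abs_mul]
          exact mul_le_mul_of_nonneg_left (hC j z) (abs_nonneg _)
      _ = C * ∑ j, |v j| := by rw [← Finset.sum_mul, mul_comm]
  set φ : ℝ → ℝ := fun t => f (y + t • (x - y)) with hφ
  have hline : ∀ t : ℝ, HasDerivAt (fun s : ℝ => y + s • (x - y)) (x - y) t := by
    intro t
    simpa using ((hasDerivAt_id t).smul_const (x - y)).const_add y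
  have hder : ∀ t : ℝ, HasDerivAt φ (fderiv ℝ f (y + t • (x - y)) (x - y)) t := by
    intro t
    exact (hd (y + t • (x - y))).hasFDerivAt.comp_hasDerivAt t (hline t)
  have key := Convex.norm_image_sub_le_of_norm_hasDerivWithin_le
    (f := φ) (f' := fun t => fderiv ℝ f (y + t • (x - y)) (x - y))
    (C := C * ∑ j, |x j - y j|) (s := Set.univ)
    (fun t _ => (hder t).hasDerivWithinAt)
    (fun t _ => by
      rw [Real.norm_eq_abs]
      have := hdir (y + t • (x - y)) (x - y)
      simpa using this)
    convex_univ (Set.mem_univ (0:ℝ)) (Set.mem_univ (1:ℝ))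
  have h0 : φ 0 = f y := by simp [hφ]
  have h1 : φ 1 = f x := by simp [hφ]
  rw [h0, h1] at key
  simpa using key

/-- **Theorem 1.** Quasi-interpolation error estimate: if `f` is `C¹` with support in
`[-1,1]ⁿ` and `C` bounds all partial derivatives `∂ⱼ f` (so that the best such `C` is
`max_j ‖∂ⱼ f‖_∞`), then for `x ∈ [-1,1]ⁿ`,
`|f(x) - ∑_{i ∈ Z_kⁿ} f(i/k) gₙ(kx - i)| ≤ C · n / (2k)`. -/
theorem quasi_interpolation_error (n k : ℕ) (hn : 1 ≤ n) (hk : 1 ≤ k)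
    (f : (Fin n → ℝ) → ℝ) (hf : ContDiff ℝ 1 f)
    (hsupp : Function.support f ⊆ Set.Icc (fun _ => (-1 : ℝ)) (fun _ => 1))
    (C : ℝ)
    (hC : ∀ (j : Fin n) (x : Fin n → ℝ), |fderiv ℝ f x (Pi.single j 1)| ≤ C)
    (x : Fin n → ℝ) (hx : x ∈ Set.Icc (fun _ => (-1 : ℝ)) (fun _ => 1)) :
    |f x - ∑ i ∈ Fintype.piFinset (fun _ : Fin n => Finset.Icc (-(k : ℤ)) k),
        f (fun j => (i j : ℝ) / k) * gn (fun j => k * x j - i j)|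
      ≤ C * n / (2 * k) := by
  have hkpos : (0:ℝ) < k := by exact_mod_cast hk
  rw [Set.mem_Icc] at hx
  have hxj : ∀ j, -(1:ℝ) ≤ x j ∧ x j ≤ 1 := fun j => ⟨hx.1 j, hx.2 j⟩
  have htj : ∀ j, -(k:ℝ) ≤ (k:ℝ) * x j ∧ (k:ℝ) * x j ≤ k := by
    intro j
    constructor
    · nlinarith [(hxj j).1]
    · nlinarith [(hxj j).2]
  set S := Fintype.piFinset (fun _ : Fin n => Finset.Icc (-(k : ℤ)) k) with hS
  set G : (Fin n → ℤ) → ℝ := fun i => ∏ j, g1 ((k:ℝ) * x j - i j) with hG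
  have hGnn : ∀ i, 0 ≤ G i := fun i => Finset.prod_nonneg fun j _ => g1_nonneg _
  have hgnG : ∀ i : Fin n → ℤ, gn (fun j => (k:ℝ) * x j - i j) = G i := fun i => rfl
  -- Step 1: partition of unity
  have hsum1 : ∑ i ∈ S, G i = 1 := by
    have hps := Finset.prod_univ_sum (fun _ : Fin n => Finset.Icc (-(k:ℤ)) k)
      (fun j a => g1 ((k:ℝ) * x j - a))
    calc ∑ i ∈ S, G i = ∏ j, ∑ a ∈ Finset.Icc (-(k:ℤ)) k, g1 ((k:ℝ) * x j - a) := hps.symm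
      _ = 1 := Finset.prod_eq_one fun j _ => sum_g1_eq_one k _ (htj j).1 (htj j).2
  -- Step 2: rewrite the error as a weighted sum
  have hrw : f x - ∑ i ∈ S, f (fun j => (i j : ℝ) / k) * G i
      = ∑ i ∈ S, (f x - f (fun j => (i j : ℝ) / k)) * G i := by
    simp only [sub_mul]
    rw [Finset.sum_sub_distrib, ← Finset.mul_sum, hsum1, mul_one]
  -- Step 4 core: per-coordinate weighted bound
  have hj : ∀ j₀ : Fin n, ∑ i ∈ S, |x j₀ - (i j₀ : ℝ) / k| * G i ≤ 1 / (2 * k) := by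
    intro j₀
    set H : Fin n → ℤ → ℝ := fun l a =>
      (if l = j₀ then |(k:ℝ) * x j₀ - a| / k else 1) * g1 ((k:ℝ) * x l - a) with hH
    have hterm : ∀ i : Fin n → ℤ, ∏ l, H l (i l) = |x j₀ - (i j₀ : ℝ) / k| * G i := by
      intro i
      rw [hH, hG]
      simp only
      rw [Finset.prod_mul_distrib]
      congr 1
      rw [Finset.prod_ite_eq' Finset.univ j₀ (fun l => |(k:ℝ) * x j₀ - i l| / k)]
      simp only [Finset.mem_univ, if_true]
      rw [abs_sub_comm, show (i j₀ : ℝ) - (k:ℝ) * x j₀ = (k:ℝ) * ((i j₀ : ℝ)/k - x j₀) by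
        field_simp, abs_mul, abs_of_pos hkpos]
      rw [abs_sub_comm]
      field_simp
    calc ∑ i ∈ S, |x j₀ - (i j₀ : ℝ) / k| * G i
        = ∑ i ∈ S, ∏ l, H l (i l) := by
          exact Finset.sum_congr rfl fun i _ => (hterm i).symm
      _ = ∏ l, ∑ a ∈ Finset.Icc (-(k:ℤ)) k, H l a := (Finset.prod_univ_sum _ _).symm
      _ = ∑ a ∈ Finset.Icc (-(k:ℤ)) k, H j₀ a := by
          apply Finset.prod_eq_single_of_mem j₀ (Finset.mem_univ _)
          intro l _ hl
          simp only [hH, if_neg hl, one_mul]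
          exact sum_g1_eq_one k _ (htj l).1 (htj l).2
      _ ≤ 1 / (2 * k) := by
          have hconv : ∑ a ∈ Finset.Icc (-(k:ℤ)) k, H j₀ a
              = (∑ a ∈ Finset.Icc (-(k:ℤ)) k, g1 ((k:ℝ) * x j₀ - a) * |(k:ℝ) * x j₀ - a|) / k := by
            rw [Finset.sum_div]
            refine Finset.sum_congr rfl fun a _ => ?_
            simp only [hH, eq_self_iff_true, if_true]
            ring
          rw [hconv, div_le_div_iff₀ hkpos (by positivity)]
          have := sum_g1_weight k _ (htj j₀).1 (htj j₀).2
          nlinarith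
  have hC0 : 0 ≤ C := le_trans (abs_nonneg _) (hC ⟨0, hn⟩ (fun _ => 0))
  -- Steps 3 & 5
  calc |f x - ∑ i ∈ S, f (fun j => (i j : ℝ) / k) * gn (fun j => (k:ℝ) * x j - i j)|
      = |∑ i ∈ S, (f x - f (fun j => (i j : ℝ) / k)) * G i| := by
        simp only [hgnG]; rw [hrw]
    _ ≤ ∑ i ∈ S, |(f x - f (fun j => (i j : ℝ) / k)) * G i| := Finset.abs_sum_le_sum_abs _ _
    _ = ∑ i ∈ S, |f x - f (fun j => (i j : ℝ) / k)| * G i := by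
        exact Finset.sum_congr rfl fun i _ => by rw [abs_mul, abs_of_nonneg (hGnn i)]
    _ ≤ ∑ i ∈ S, (C * ∑ j, |x j - (i j : ℝ) / k|) * G i := by
        refine Finset.sum_le_sum fun i _ => ?_
        exact mul_le_mul_of_nonneg_right (mvt_bound f hf C hC x _) (hGnn i)
    _ = ∑ i ∈ S, ∑ j, C * (|x j - (i j : ℝ) / k| * G i) := by
        refine Finset.sum_congr rfl fun i _ => ?_
        rw [Finset.mul_sum, Finset.sum_mul]
        exact Finset.sum_congr rfl fun j _ => by ring
    _ = ∑ j, ∑ i ∈ S, C * (|x j - (i j : ℝ) / k| * G i) := Finset.sum_comm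
    _ = C * ∑ j, ∑ i ∈ S, |x j - (i j : ℝ) / k| * G i := by
        rw [Finset.mul_sum]
        exact Finset.sum_congr rfl fun j _ => (Finset.mul_sum _ _ _).symm
    _ ≤ C * ∑ j : Fin n, 1 / (2 * (k:ℝ)) := by
        refine mul_le_mul_of_nonneg_left (Finset.sum_le_sum fun j _ => hj j) hC0
    _ = C * n / (2 * k) := by
        rw [Finset.sum_const, Finset.card_univ, Fintype.card_fin, nsmul_eq_mul]
        field_simp
end

section
/- Let k ≥ 1 be a natural number. For every x ∈ [-1,1], Σ_{i=-k}^{k} |x - i/k| · g_1(k·x - i) = (2/k) · (k·x - ⌊k·x⌋) · (1 - (k·x - ⌊k·x⌋)), and consequently Σ_{i=-k}^{k} |x - i/k| · g_1(k·x - i) ≤ 1/(2k), where ⌊·⌋ denotes the floor function. -/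
/-- **Base case (equation (4)) of Lemma 5.** For `x ∈ [-1,1]`,
`∑_{i=-k}^{k} |x - i/k| g₁(kx - i) = (2/k)(kx - ⌊kx⌋)(1 - (kx - ⌊kx⌋)) ≤ 1/(2k)`. -/
theorem g1_moment_estimate (k : ℕ) (hk : 1 ≤ k)
    (x : ℝ) (hx : x ∈ Set.Icc (-1 : ℝ) 1) :
    (∑ i ∈ Finset.Icc (-(k : ℤ)) k, |x - (i : ℝ) / k| * g1 (k * x - i)
      = 2 / k * ((k : ℝ) * x - ⌊(k : ℝ) * x⌋) * (1 - ((k : ℝ) * x - ⌊(k : ℝ) * x⌋))) ∧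
    ∑ i ∈ Finset.Icc (-(k : ℤ)) k, |x - (i : ℝ) / k| * g1 (k * x - i) ≤ 1 / (2 * k) := by
  obtain ⟨hx1, hx2⟩ := hx
  have hkR : (1:ℝ) ≤ k := by exact_mod_cast hk
  have hk0 : (0:ℝ) < k := by linarith
  set y : ℝ := (k:ℝ) * x with hy
  set m : ℤ := ⌊y⌋ with hm
  have hfl : (m:ℝ) ≤ y := Int.floor_le y
  have hfl' : y < m + 1 := Int.lt_floor_add_one y
  have ht0 : 0 ≤ y - m := by linarith
  have ht1 : y - m < 1 := by linarith
  have hym : -(k:ℝ) ≤ y := by nlinarith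
  have hyM : y ≤ (k:ℝ) := by nlinarith
  have hmlb : -(k:ℤ) ≤ m := by
    apply Int.le_floor.mpr
    push_cast
    linarith
  have hmub : m ≤ (k:ℤ) := by
    have : m ≤ ⌊(k:ℝ)⌋ := Int.floor_le_floor hyM
    simpa using this
  have key : ∀ i : ℤ, |x - (i:ℝ)/k| * g1 ((k:ℝ)*x - i) = |y - i| * g1 (y - i) / k := by
    intro i
    have h1 : x - (i:ℝ)/k = (y - i)/k := by field_simp [hy]; ring
    have h2 : (k:ℝ)*x - i = y - i := by rw [hy]
    rw [h1, h2, abs_div, abs_of_pos hk0]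
    ring
  have hzero : ∀ i : ℤ, i ≠ m → i ≠ m + 1 → g1 (y - i) = 0 := by
    intro i h1 h2
    have hcase : i ≤ m - 1 ∨ m + 2 ≤ i := by omega
    have habs : 1 ≤ |y - i| := by
      rcases hcase with h | h
      · have : (i:ℝ) ≤ m - 1 := by exact_mod_cast h
        rw [abs_of_nonneg (by linarith)]
        linarith
      · have : (m:ℝ) + 2 ≤ i := by exact_mod_cast h
        rw [abs_of_nonpos (by linarith)]
        linarith
    unfold g1
    rw [max_eq_right]
    linarith
  by_cases hmk : m = (k:ℤ)
  · -- here y = k, fractional part is 0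
    have hyk : y = (m:ℝ) := by
      have : (m:ℝ) = (k:ℝ) := by exact_mod_cast hmk
      linarith [this ▸ hyM, hfl]
    have hsum : ∑ i ∈ Finset.Icc (-(k : ℤ)) k, |x - (i : ℝ) / k| * g1 ((k:ℝ) * x - i) = 0 := by
      apply Finset.sum_eq_zero
      intro i _
      rw [key i]
      by_cases hi : i = m
      · subst hi
        rw [hyk]
        simp
      · by_cases hi' : i = m + 1
        · subst hi'
          have : y - ((m:ℤ)+1 : ℤ) = -1 := by push_cast; linarith
          rw [this]
          unfold g1
          simp
        · rw [hzero i hi hi']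
          simp
    constructor
    · rw [hsum, hyk]
      simp
    · rw [hsum]
      positivity
  · -- m < k, so m+1 ∈ Icc
    have hmub' : m + 1 ≤ (k:ℤ) := by omega
    have hsub : ({m, m+1} : Finset ℤ) ⊆ Finset.Icc (-(k:ℤ)) k := by
      intro i hi
      simp only [Finset.mem_insert, Finset.mem_singleton] at hi
      rcases hi with h | h <;> subst h <;> simp [Finset.mem_Icc] <;> omega
    have hsum : ∑ i ∈ Finset.Icc (-(k : ℤ)) k, |x - (i : ℝ) / k| * g1 ((k:ℝ) * x - i)
        = ∑ i ∈ ({m, m+1} : Finset ℤ), |x - (i : ℝ) / k| * g1 ((k:ℝ) * x - i) := by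
      refine (Finset.sum_subset hsub ?_).symm
      intro i _ hi
      simp only [Finset.mem_insert, Finset.mem_singleton, not_or] at hi
      rw [key i, hzero i hi.1 hi.2]
      simp
    have hne : m ≠ m + 1 := by omega
    rw [hsum, Finset.sum_pair hne, key m, key (m+1)]
    have e1 : |y - (m:ℝ)| = y - m := abs_of_nonneg ht0
    have e2 : y - ((m+1 : ℤ):ℝ) = y - m - 1 := by push_cast; ring
    have e3 : |y - ((m+1:ℤ):ℝ)| = 1 - (y - m) := by
      rw [e2, abs_of_nonpos (by linarith)]
      ring
    have g1a : g1 (y - (m:ℝ)) = 1 - (y - m) := by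
      unfold g1
      rw [e1, max_eq_left (by linarith)]
    have g1b : g1 (y - ((m+1:ℤ):ℝ)) = y - m := by
      unfold g1
      rw [e3, max_eq_left (by linarith)]; ring
    rw [e1, e3, g1a, g1b]
    constructor
    · field_simp
      ring
    · rw [← add_div, div_le_div_iff₀ hk0 (by positivity)]
      nlinarith [sq_nonneg (y - m - 1/2), sq_nonneg ((k:ℝ) - 1)]
end

section
/- Let k ≥ 1 be a natural number and let f : ℝ → ℝ be continuously differentiable with support contained in [-1,1]. Define the function F : ℝ → ℝ by F(x) = Σ_{i=-k}^{k} f(i/k) · (σ(k·x - i - 1) - 2·σ(k·x - i) + σ(k·x - i + 1)). Then F is exactly realized by a ReLU network with 2 hidden layers of widths 3(2k+1) and 2k+1, and sup_{x ∈ [-1,1]} |f(x) - F(x)| ≤ ‖f'‖_∞ / (2k), where ‖f'‖_∞ is the supremum norm of the derivative of f over ℝ. -/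
/-- The ReLU function `σ(x) = max{x, 0}`. -/
noncomputable def relu (x : ℝ) : ℝ := max x 0

/-- `RealizedByReluNet n₀ ws F` means the scalar-valued function `F : ℝ^{n₀} → ℝ` is exactly
a ReLU network with hidden layers of widths given by the list `ws`:
`F = W_{L+1} ∘ σ ∘ W_L ∘ ⋯ ∘ σ ∘ W_1` with affine maps `W_i` (given by a matrix and a bias
vector) and the ReLU `σ` applied componentwise. -/
def RealizedByReluNet : (n0 : ℕ) → List ℕ → ((Fin n0 → ℝ) → ℝ) → Prop
  | n0, [], F => ∃ (a : Fin n0 → ℝ) (b : ℝ), ∀ x, F x = ∑ j, a j * x j + b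
  | n0, w :: ws, F => ∃ (A : Matrix (Fin w) (Fin n0) ℝ) (b : Fin w → ℝ)
      (G : (Fin w → ℝ) → ℝ), RealizedByReluNet w ws G ∧
      ∀ x, F x = G (fun i => relu (A.mulVec x i + b i))

lemma hat_eq (s : ℝ) : relu (s - 1) - 2 * relu s + relu (s + 1) = max (1 - |s|) 0 := by
  unfold relu
  rcases le_total s 0 with hs | hs
  · rcases le_total s (-1) with h1 | h1
    · rw [max_eq_right (by linarith), max_eq_right (by linarith), max_eq_right (by linarith),
        max_eq_right (by rw [abs_of_nonpos hs]; linarith)]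
      ring
    · rw [max_eq_right (by linarith), max_eq_right hs, max_eq_left (by linarith),
        max_eq_left (by rw [abs_of_nonpos hs]; linarith), abs_of_nonpos hs]
      ring
  · rcases le_total s 1 with h1 | h1
    · rw [max_eq_right (by linarith), max_eq_left hs, max_eq_left (by linarith),
        max_eq_left (by rw [abs_of_nonneg hs]; linarith), abs_of_nonneg hs]
      ring
    · rw [max_eq_left (by linarith), max_eq_left (by linarith), max_eq_left (by linarith),
        max_eq_right (by rw [abs_of_nonneg hs]; linarith)]
      ring

lemma sum_shift (k : ℕ) (h : ℤ → ℝ) :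
    ∑ i ∈ Finset.Icc (-(k:ℤ)) k, h i = ∑ m ∈ Finset.range (2*k+1), h ((m:ℤ) - k) := by
  apply Finset.sum_nbij' (i := fun i : ℤ => (i + k).toNat) (j := fun m : ℕ => (m:ℤ) - k) <;>
    simp only [Finset.mem_Icc, Finset.mem_range]
  · intro a ha; omega
  · intro a ha; omega
  · intro a ha; omega
  · intro a ha; omega
  · intro a ha; congr 1; omega

/-- **Theorem 2, one-dimensional case.** For `f ∈ C¹(ℝ)` supported in `[-1,1]` and `C` a
bound for `|f'|` (so that the best such `C` is `‖f'‖_∞`), the function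
`F(x) = ∑_{i=-k}^k f(i/k)(σ(kx-i-1) - 2σ(kx-i) + σ(kx-i+1))` is exactly realized by a ReLU
network with 2 hidden layers of widths `3(2k+1)` and `2k+1`, and
`sup_{x ∈ [-1,1]} |f(x) - F(x)| ≤ C/(2k)`. -/
theorem one_dimensional_network_approximation (k : ℕ) (hk : 1 ≤ k)
    (f : ℝ → ℝ) (hf : ContDiff ℝ 1 f)
    (hsupp : Function.support f ⊆ Set.Icc (-1 : ℝ) 1)
    (C : ℝ) (hC : ∀ x : ℝ, |deriv f x| ≤ C) :
    ∃ F : ℝ → ℝ,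
      (∀ x : ℝ, F x = ∑ i ∈ Finset.Icc (-(k : ℤ)) k, f ((i : ℝ) / k) *
        (relu (k * x - i - 1) - 2 * relu (k * x - i) + relu (k * x - i + 1))) ∧
      (∃ G : (Fin 1 → ℝ) → ℝ,
        RealizedByReluNet 1 [3 * (2 * k + 1), 2 * k + 1] G ∧
        ∀ x : ℝ, F x = G (fun _ => x)) ∧
      ∀ x ∈ Set.Icc (-1 : ℝ) 1, |f x - F x| ≤ C / (2 * k) := by
  classical
  have hFmax : ∀ x : ℝ, (∑ i ∈ Finset.Icc (-(k : ℤ)) k, f ((i : ℝ) / k) *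
        (relu ((k:ℝ) * x - i - 1) - 2 * relu ((k:ℝ) * x - i) + relu ((k:ℝ) * x - i + 1)))
      = ∑ i ∈ Finset.Icc (-(k : ℤ)) k, f ((i : ℝ) / k) * max (1 - |(k:ℝ) * x - i|) 0 :=
    fun x => Finset.sum_congr rfl fun i _ => by rw [hat_eq]
  refine ⟨fun x => ∑ i ∈ Finset.Icc (-(k : ℤ)) k, f ((i : ℝ) / k) *
        (relu ((k:ℝ) * x - i - 1) - 2 * relu ((k:ℝ) * x - i) + relu ((k:ℝ) * x - i + 1)),
    fun x => rfl, ?_, ?_⟩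
  · -- the network realization
    set e : Fin 3 × Fin (2*k+1) ≃ Fin (3*(2*k+1)) := finProdFinEquiv with he
    set sh : Fin 3 → ℝ := ![-1, 0, 1] with hsh
    set c : Fin 3 → ℝ := ![1, -2, 1] with hc
    set A1 : Matrix (Fin (3*(2*k+1))) (Fin 1) ℝ := fun _ _ => (k:ℝ) with hA1
    set b1 : Fin (3*(2*k+1)) → ℝ := fun j => (k:ℝ) - ((e.symm j).2 : ℕ) + sh (e.symm j).1 with hb1
    set A2 : Matrix (Fin (2*k+1)) (Fin (3*(2*k+1))) ℝ :=
      fun m j => if (e.symm j).2 = m then c (e.symm j).1 else 0 with hA2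
    set aout : Fin (2*k+1) → ℝ := fun m => f ((((m:ℕ):ℝ) - k)/k) with haout
    refine ⟨fun v => (∑ m, aout m *
        relu (A2.mulVec (fun j => relu (A1.mulVec v j + b1 j)) m + (0 : Fin (2*k+1) → ℝ) m)) + 0,
      ⟨A1, b1, _, ⟨A2, 0, _, ⟨aout, 0, fun z => rfl⟩, fun y => rfl⟩, fun v => rfl⟩, ?_⟩
    intro x
    beta_reduce
    rw [hFmax x]
    have hmv1 : ∀ j, A1.mulVec (fun _ => x) j = (k:ℝ) * x := by
      intro j
      simp [Matrix.mulVec, dotProduct, hA1]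
    set y : Fin (3*(2*k+1)) → ℝ := fun j => relu (A1.mulVec (fun _ => x) j + b1 j) with hy
    have key : ∀ m : Fin (2*k+1), A2.mulVec y m = max (1 - |(k:ℝ)*x - (((m:ℕ):ℝ) - k)|) 0 := by
      intro m
      have h1 : A2.mulVec y m = ∑ p : Fin 3 × Fin (2*k+1), A2 m (e p) * y (e p) := by
        rw [Matrix.mulVec, dotProduct, ← Equiv.sum_comp e (fun j => A2 m j * y j)]
      rw [h1]
      rw [Fintype.sum_prod_type]
      have h2 : ∀ (r : Fin 3) (m' : Fin (2*k+1)),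
          A2 m (e (r, m')) * y (e (r, m')) =
            if m' = m then c r * y (e (r, m')) else 0 := by
        intro r m'
        simp [hA2, ite_mul]
      simp only [h2]
      rw [Finset.sum_congr rfl (fun r _ => Finset.sum_ite_eq' Finset.univ m
        (fun m' => c r * y (e (r, m'))))]
      simp only [Finset.mem_univ, if_true]
      have h3 : ∀ r : Fin 3, y (e (r, m)) = relu ((k:ℝ)*x + ((k:ℝ) - ((m:ℕ):ℝ) + sh r)) := by
        intro r
        rw [hy]
        simp only [hmv1, hb1, Equiv.symm_apply_apply]
      rw [Fin.sum_univ_three]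
      simp only [h3, hc, hsh]
      rw [← hat_eq ((k:ℝ)*x - (((m:ℕ):ℝ) - k))]
      norm_num [Matrix.cons_val_zero, Matrix.cons_val_one, Matrix.cons_val_two, Matrix.tail_cons, Matrix.head_cons]
      ring_nf
    show _ = (∑ m, aout m * relu (A2.mulVec y m + (0 : Fin (2*k+1) → ℝ) m)) + 0
    have hrel : ∀ m : Fin (2*k+1), relu (A2.mulVec y m + (0 : Fin (2*k+1) → ℝ) m)
        = max (1 - |(k:ℝ)*x - (((m:ℕ):ℝ) - k)|) 0 := by
      intro m
      have h0 : A2.mulVec y m + (0 : Fin (2*k+1) → ℝ) m = A2.mulVec y m := by simp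
      rw [h0, key m, relu, max_eq_left (le_max_right _ _)]
    have lhs : (∑ i ∈ Finset.Icc (-(k : ℤ)) k, f ((i : ℝ) / k) * max (1 - |(k:ℝ) * x - i|) 0)
        = ∑ m ∈ Finset.range (2*k+1),
          f ((((m:ℕ):ℝ) - k)/k) * max (1 - |(k:ℝ)*x - (((m:ℕ):ℝ)-k)|) 0 := by
      rw [sum_shift k (fun i => f ((i:ℝ)/k) * max (1 - |(k:ℝ)*x - (i:ℝ)|) 0)]
      refine Finset.sum_congr rfl fun m _ => ?_
      push_cast
      ring_nf
    rw [lhs]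
    simp only [hrel, haout, add_zero]
    rw [Fin.sum_univ_eq_sum_range
      (fun m => f ((((m:ℕ):ℝ) - k)/k) * max (1 - |(k:ℝ)*x - (((m:ℕ):ℝ)-k)|) 0) (2*k+1)]
  · -- the error bound
    have kpos : (0:ℝ) < k := by exact_mod_cast hk
    have hC0 : 0 ≤ C := le_trans (abs_nonneg _) (hC 0)
    have lip : ∀ a b : ℝ, |f b - f a| ≤ C * |b - a| := by
      intro a b
      have hd : ∀ z ∈ Set.univ, HasDerivWithinAt f (deriv f z) Set.univ z := fun z _ =>
        ((hf.differentiable one_ne_zero) z).hasDerivAt.hasDerivWithinAt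
      have := convex_univ.norm_image_sub_le_of_norm_hasDerivWithin_le hd
        (fun z _ => by simpa [Real.norm_eq_abs] using hC z) (Set.mem_univ a) (Set.mem_univ b)
      simpa [Real.norm_eq_abs] using this
    rintro x ⟨hx1, hx2⟩
    beta_reduce
    rw [hFmax x]
    set t : ℝ := k * x with ht
    have htl : -(k:ℝ) ≤ t := by nlinarith
    have htu : t ≤ k := by nlinarith
    set i0 : ℤ := min ⌊t⌋ (k - 1) with hi0
    have hA : -(k:ℤ) ≤ i0 := by
      rw [hi0]
      refine le_min (Int.le_floor.2 (by push_cast; linarith)) (by omega)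
    have hA2 : i0 ≤ (k:ℤ) - 1 := min_le_right _ _
    have hB1 : (i0:ℝ) ≤ t := by
      rcases le_total (⌊t⌋) ((k:ℤ) - 1) with h | h
      · rw [hi0, min_eq_left h]; exact Int.floor_le t
      · rw [hi0, min_eq_right h]
        exact le_trans (by exact_mod_cast h : (((k:ℤ) - 1 : ℤ):ℝ) ≤ (⌊t⌋:ℝ)) (Int.floor_le t)
    have hB2 : t ≤ (i0:ℝ) + 1 := by
      rcases le_total (⌊t⌋) ((k:ℤ) - 1) with h | h
      · rw [hi0, min_eq_left h]; exact le_of_lt (Int.lt_floor_add_one t)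
      · rw [hi0, min_eq_right h]; push_cast; linarith
    clear hi0
    clear_value i0
    set u : ℝ := t - i0 with hu
    have hu0 : 0 ≤ u := by rw [hu]; linarith
    have hu1 : u ≤ 1 := by rw [hu]; linarith
    clear_value u
    have hpair : ({i0, i0 + 1} : Finset ℤ) ⊆ Finset.Icc (-(k:ℤ)) k := by
      intro j hj
      simp only [Finset.mem_insert, Finset.mem_singleton] at hj
      rw [Finset.mem_Icc]
      rcases hj with rfl | rfl <;> omega
    have hzero : ∀ j ∈ Finset.Icc (-(k:ℤ)) k, j ∉ ({i0, i0 + 1} : Finset ℤ) →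
        f ((j : ℝ) / k) * max (1 - |(k:ℝ) * x - j|) 0 = 0 := by
      intro j hj hj'
      simp only [Finset.mem_insert, Finset.mem_singleton, not_or] at hj'
      have h1 : |(k:ℝ) * x - j| ≥ 1 := by
        rcases lt_or_gt_of_ne hj'.1 with h | h
        · have : (j:ℝ) ≤ (i0:ℝ) - 1 := by exact_mod_cast Int.le_sub_one_of_lt h
          rw [abs_of_nonneg (by rw [← ht]; linarith)]
          rw [← ht]; linarith
        · have : (i0:ℝ) + 2 ≤ (j:ℝ) := by
            have : i0 + 2 ≤ j := by omega
            exact_mod_cast this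
          rw [abs_of_nonpos (by rw [← ht]; linarith), ← ht]; linarith
      rw [max_eq_right (by linarith)]
      ring
    have hsum : (∑ i ∈ Finset.Icc (-(k : ℤ)) k, f ((i : ℝ) / k) * max (1 - |(k:ℝ) * x - i|) 0)
        = f ((i0:ℝ)/k) * (1 - u) + f (((i0:ℝ)+1)/k) * u := by
      rw [← Finset.sum_subset hpair hzero]
      rw [Finset.sum_pair (by omega : i0 ≠ i0 + 1)]
      have e1 : max (1 - |(k:ℝ) * x - i0|) 0 = 1 - u := by
        rw [← ht, show t - (i0:ℝ) = u from hu.symm, abs_of_nonneg hu0]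
        exact max_eq_left (by linarith)
      have e2 : max (1 - |(k:ℝ) * x - (i0 + 1 : ℤ)|) 0 = u := by
        have hc : ((i0 + 1 : ℤ) : ℝ) = (i0:ℝ) + 1 := by push_cast; ring
        rw [hc, ← ht, show t - ((i0:ℝ)+1) = u - 1 by rw [hu]; ring,
          abs_of_nonpos (by linarith)]
        rw [show (1 : ℝ) - -(u - 1) = u by ring]
        exact max_eq_left hu0
      rw [e1, e2]
      push_cast
      ring
    rw [hsum]
    have hx0 : x - (i0:ℝ)/k = u / k := by
      rw [hu, ht]; field_simp
    have hx1' : ((i0:ℝ)+1)/k - x = (1 - u) / k := by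
      rw [hu, ht]; field_simp; ring
    have d1 : |f x - f ((i0:ℝ)/k)| ≤ C * (u/k) := by
      have habs : |x - (i0:ℝ)/k| = u/k := by
        rw [hx0]; exact abs_of_nonneg (div_nonneg hu0 kpos.le)
      have h := lip ((i0:ℝ)/k) x
      rwa [habs] at h
    have d2 : |f x - f (((i0:ℝ)+1)/k)| ≤ C * ((1-u)/k) := by
      have habs : |x - (((i0:ℝ)+1)/k)| = (1-u)/k := by
        rw [abs_sub_comm, hx1']
        exact abs_of_nonneg (div_nonneg (by linarith) kpos.le)
      have h := lip (((i0:ℝ)+1)/k) x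
      rwa [habs] at h
    have key : f x - (f ((i0:ℝ)/k) * (1 - u) + f (((i0:ℝ)+1)/k) * u)
        = (1-u)*(f x - f ((i0:ℝ)/k)) + u*(f x - f (((i0:ℝ)+1)/k)) := by ring
    rw [key]
    calc |(1-u)*(f x - f ((i0:ℝ)/k)) + u*(f x - f (((i0:ℝ)+1)/k))|
        ≤ |(1-u)*(f x - f ((i0:ℝ)/k))| + |u*(f x - f (((i0:ℝ)+1)/k))| := abs_add_le _ _
      _ = (1-u)*|f x - f ((i0:ℝ)/k)| + u*|f x - f (((i0:ℝ)+1)/k)| := by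
          rw [abs_mul, abs_mul, abs_of_nonneg (by linarith : (0:ℝ) ≤ 1 - u), abs_of_nonneg hu0]
      _ ≤ (1-u)*(C*(u/k)) + u*(C*((1-u)/k)) := by
          gcongr <;> first | exact d1 | exact d2 | linarith
      _ = (2*C*(u*(1-u)))/k := by ring
      _ ≤ (C/2)/k := by
          gcongr
          nlinarith [sq_nonneg (2*u - 1)]
      _ = C / (2*k) := by ring
end

section
/- Let r ≥ 2 and m ≥ 1 be natural numbers. There exists a function Mult : ℝ^r → ℝ realized by a ReLU network with (m+5)·⌈log₂ r⌉ hidden layers, each of width at most 6r (i.e. Mult = W_{L+1} ∘ σ ∘ W_L ∘ σ ∘ ⋯ ∘ σ ∘ W_1 for affine maps W_1 : ℝ^r → ℝ^{6r}, W_2, …, W_L : ℝ^{6r} → ℝ^{6r}, W_{L+1} : ℝ^{6r} → ℝ with L = (m+5)·⌈log₂ r⌉, where σ is applied componentwise), such that |Mult(x) - Π_{j=1}^r x_j| ≤ 3^r · 2^{-m} for all x = (x_1,…,x_r) ∈ [0,1]^r. -/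
namespace SH

lemma relu_nonneg (x : ℝ) : 0 ≤ relu x := le_max_right x 0
lemma relu_of_nonneg {x : ℝ} (h : 0 ≤ x) : relu x = x := max_eq_left h
lemma relu_of_nonpos {x : ℝ} (h : x ≤ 0) : relu x = 0 := max_eq_right h
lemma relu_relu (x : ℝ) : relu (relu x) = relu x := relu_of_nonneg (relu_nonneg x)
lemma abs_relu_sub_le {a b : ℝ} (hb : 0 ≤ b) : |relu a - b| ≤ |a - b| := by
  have h := abs_max_sub_max_le_abs a b 0
  rw [max_eq_left hb] at h
  exact h

/-- Vector-valued ReLU network with `d` hidden layers, all of width `W`. -/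
def RVec : (n0 n1 W d : ℕ) → ((Fin n0 → ℝ) → (Fin n1 → ℝ)) → Prop
  | n0, n1, _, 0, F => ∃ (A : Matrix (Fin n1) (Fin n0) ℝ) (b : Fin n1 → ℝ),
      ∀ x, F x = A.mulVec x + b
  | n0, n1, W, d+1, F => ∃ (A : Matrix (Fin W) (Fin n0) ℝ) (b : Fin W → ℝ)
      (G : (Fin W → ℝ) → (Fin n1 → ℝ)), RVec W n1 W d G ∧
      ∀ x, F x = G (fun i => relu (A.mulVec x i + b i))

lemma RVec.congr {n0 n1 W d F F'} (h : RVec n0 n1 W d F)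
    (hFF : ∀ x, F x = F' x) : RVec n0 n1 W d F' := by
  cases d with
  | zero => obtain ⟨A, b, hA⟩ := h; exact ⟨A, b, fun x => (hFF x).symm.trans (hA x)⟩
  | succ d =>
      obtain ⟨A, b, G, hG, hA⟩ := h
      exact ⟨A, b, G, hG, fun x => (hFF x).symm.trans (hA x)⟩

lemma RVec.affine_pre {n0 n1 n2 W d F} (h : RVec n1 n2 W d F)
    (B : Matrix (Fin n1) (Fin n0) ℝ) (c : Fin n1 → ℝ) :
    RVec n0 n2 W d (fun x => F (B.mulVec x + c)) := by
  cases d with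
  | zero =>
      obtain ⟨A, b, hA⟩ := h
      refine ⟨A * B, A.mulVec c + b, fun x => ?_⟩
      show F (B.mulVec x + c) = _
      rw [hA, Matrix.mulVec_add, ← Matrix.mulVec_mulVec]
      abel
  | succ d =>
      obtain ⟨A, b, G, hG, hA⟩ := h
      refine ⟨A * B, A.mulVec c + b, G, hG, fun x => ?_⟩
      show F (B.mulVec x + c) = _
      rw [hA]
      congr 1
      funext i
      rw [Matrix.mulVec_add, ← Matrix.mulVec_mulVec]
      simp [add_assoc]

lemma RVec.comp {n0 n1 n2 W d e F G} (hF : RVec n0 n1 W d F) (hG : RVec n1 n2 W e G) :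
    RVec n0 n2 W (d + e) (fun x => G (F x)) := by
  induction d generalizing n0 F with
  | zero =>
      obtain ⟨B, c, hB⟩ := hF
      rw [Nat.zero_add]
      exact (hG.affine_pre B c).congr (fun x => by rw [← hB])
  | succ d ih =>
      obtain ⟨A, b, G', hG', hA⟩ := hF
      rw [Nat.succ_add]
      exact ⟨A, b, fun y => G (G' y), ih hG', fun x => by show G (F x) = _; rw [hA]⟩

lemma RVec.select {n0 n0' n1 W d F} (h : RVec n0 n1 W d F) (σ : Fin n0 → Fin n0') :
    RVec n0' n1 W d (fun x => F (fun j => x (σ j))) := by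
  have h2 := h.affine_pre (Matrix.of fun j k => if k = σ j then (1:ℝ) else 0) 0
  refine h2.congr (fun x => ?_)
  show F _ = F _
  have harg : ((Matrix.of fun j k => if k = σ j then (1:ℝ) else 0).mulVec x + 0)
      = (fun j => x (σ j)) := by
    funext j
    simp [Matrix.mulVec, dotProduct, ite_mul]
  rw [harg]

lemma RVec.mono {n0 n1 W W' d F} (h : RVec n0 n1 W d F) (hW : W ≤ W') :
    RVec n0 n1 W' d F := by
  induction d generalizing n0 F with
  | zero => exact h
  | succ d ih =>
      obtain ⟨A, b, G, hG, hA⟩ := h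
      refine ⟨Matrix.of fun i j => if hi : (i : ℕ) < W then A ⟨i, hi⟩ j else 0,
        fun i => if hi : (i : ℕ) < W then b ⟨i, hi⟩ else 0,
        fun y => G (fun i => y (Fin.castLE hW i)), (ih hG).select (Fin.castLE hW), fun x => ?_⟩
      rw [hA]
      show _ = G _
      refine congrArg G ?_
      funext i
      have hi : ((Fin.castLE hW i : Fin W') : ℕ) < W := i.isLt
      simp only [Matrix.mulVec, dotProduct, Matrix.of_apply, hi, dif_pos]
      congr

/-- Block diagonal matrix. -/
def blockDiag {a b c d : ℕ} (A1 : Matrix (Fin c) (Fin a) ℝ) (A2 : Matrix (Fin d) (Fin b) ℝ) :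
    Matrix (Fin (c + d)) (Fin (a + b)) ℝ :=
  Matrix.of fun i j =>
    Fin.addCases (motive := fun _ => ℝ)
      (fun i1 => Fin.addCases (motive := fun _ => ℝ) (fun j1 => A1 i1 j1) (fun _ => 0) j)
      (fun i2 => Fin.addCases (motive := fun _ => ℝ) (fun _ => 0) (fun j2 => A2 i2 j2) j) i

lemma blockDiag_mulVec {a b c d : ℕ} (A1 : Matrix (Fin c) (Fin a) ℝ)
    (A2 : Matrix (Fin d) (Fin b) ℝ) (x : Fin (a + b) → ℝ) :
    (blockDiag A1 A2).mulVec x =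
      Fin.append (A1.mulVec fun j => x (Fin.castAdd b j)) (A2.mulVec fun j => x (Fin.natAdd a j)) := by
  funext i
  refine Fin.addCases (fun i1 => ?_) (fun i2 => ?_) i
  · rw [Fin.append_left]
    simp [blockDiag, Matrix.mulVec, dotProduct, Fin.sum_univ_add]
  · rw [Fin.append_right]
    simp [blockDiag, Matrix.mulVec, dotProduct, Fin.sum_univ_add]

lemma append_add {c d : ℕ} (u p : Fin c → ℝ) (v q : Fin d → ℝ) :
    Fin.append u v + Fin.append p q = Fin.append (u + p) (v + q) := by
  funext i
  refine Fin.addCases (fun i1 => ?_) (fun i2 => ?_) i <;>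
    simp [Fin.append_left, Fin.append_right]

/-- Parallel juxtaposition of two networks (as a function). -/
def parF {a b c d : ℕ} (F1 : (Fin a → ℝ) → (Fin c → ℝ)) (F2 : (Fin b → ℝ) → (Fin d → ℝ)) :
    (Fin (a + b) → ℝ) → (Fin (c + d) → ℝ) :=
  fun x => Fin.append (F1 fun j => x (Fin.castAdd b j)) (F2 fun j => x (Fin.natAdd a j))

lemma RVec.par {a b c d W1 W2 dep F1 F2} (h1 : RVec a c W1 dep F1) (h2 : RVec b d W2 dep F2) :
    RVec (a + b) (c + d) (W1 + W2) dep (parF F1 F2) := by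
  induction dep generalizing a b c d F1 F2 with
  | zero =>
      obtain ⟨A1, b1, e1⟩ := h1
      obtain ⟨A2, b2, e2⟩ := h2
      refine ⟨blockDiag A1 A2, Fin.append b1 b2, fun x => ?_⟩
      rw [blockDiag_mulVec, append_add]
      unfold parF
      rw [e1, e2]
  | succ dep ih =>
      obtain ⟨A1, b1, G1, hG1, e1⟩ := h1
      obtain ⟨A2, b2, G2, hG2, e2⟩ := h2
      refine ⟨blockDiag A1 A2, Fin.append b1 b2, parF G1 G2, ih hG1 hG2, fun x => ?_⟩
      have hlay : (fun i => relu ((blockDiag A1 A2).mulVec x i + Fin.append b1 b2 i))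
          = Fin.append (fun i => relu (A1.mulVec (fun j => x (Fin.castAdd b j)) i + b1 i))
              (fun i => relu (A2.mulVec (fun j => x (Fin.natAdd a j)) i + b2 i)) := by
        funext i
        rw [blockDiag_mulVec]
        refine Fin.addCases (fun i1 => ?_) (fun i2 => ?_) i <;>
          simp [Fin.append_left, Fin.append_right]
      rw [hlay]
      unfold parF
      rw [e1, e2]
      simp only [Fin.append_left, Fin.append_right]

/-- The componentwise ReLU map. -/
noncomputable def reluV {n : ℕ} (y : Fin n → ℝ) : Fin n → ℝ := fun i => relu (y i)

lemma RVec.reluId (n : ℕ) : ∀ e, 1 ≤ e → RVec n n n e (reluV) := by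
  intro e he
  induction e with
  | zero => omega
  | succ e ih =>
      rcases Nat.eq_or_lt_of_le he with he1 | he2
      · -- e = 0
        have he0 : e = 0 := by omega
        subst he0
        refine ⟨1, 0, fun y => y, ⟨1, 0, fun y => by simp [Matrix.one_mulVec]⟩, fun x => ?_⟩
        funext i
        simp [reluV, Matrix.one_mulVec]
      · have he1 : 1 ≤ e := by omega
        refine ⟨1, 0, reluV, ih he1, fun x => ?_⟩
        funext i
        simp [reluV, Matrix.one_mulVec, relu_relu]

lemma RVec.pad {n0 n1 W d D F} (h : RVec n0 n1 W d F) (hdD : d ≤ D) (hn : n1 ≤ W) :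
    ∃ F', RVec n0 n1 W D F' ∧ ∀ x, (∀ i, 0 ≤ F x i) → F' x = F x := by
  rcases eq_or_lt_of_le hdD with rfl | hlt
  · exact ⟨F, h, fun x _ => rfl⟩
  · have h1 : 1 ≤ D - d := by omega
    have hid := (RVec.reluId n1 (D - d) h1).mono hn
    have hcomp := h.comp hid
    have hD : d + (D - d) = D := by omega
    rw [hD] at hcomp
    refine ⟨_, hcomp, fun x hx => ?_⟩
    funext i
    exact relu_of_nonneg (hx i)

lemma RVec.toScalar {n0 W : ℕ} : ∀ {d : ℕ} {F}, RVec n0 1 W d F →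
    RealizedByReluNet n0 (List.replicate d W) (fun x => F x 0) := by
  intro d
  induction d generalizing n0 with
  | zero =>
      intro F h
      obtain ⟨A, b, hA⟩ := h
      exact ⟨fun j => A 0 j, b 0, fun x => by
        show F x 0 = _
        rw [hA]; simp [Matrix.mulVec, dotProduct]⟩
  | succ d ih =>
      intro F h
      obtain ⟨A, b, G, hG, hA⟩ := h
      exact ⟨A, b, fun y => G y 0, ih hG, fun x => by show F x 0 = _; rw [hA]⟩


/-! ### The hat function and approximation of the square -/

noncomputable def g (x : ℝ) : ℝ := 2 * relu x - 4 * relu (x - 1/2) + 2 * relu (x - 1)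

lemma g_low {x : ℝ} (h0 : 0 ≤ x) (h1 : x ≤ 1/2) : g x = 2 * x := by
  rw [g, relu_of_nonneg h0, relu_of_nonpos (by linarith), relu_of_nonpos (by linarith)]
  ring

lemma g_high {x : ℝ} (h0 : 1/2 ≤ x) (h1 : x ≤ 1) : g x = 2 - 2 * x := by
  rw [g, relu_of_nonneg (by linarith), relu_of_nonneg (by linarith),
    relu_of_nonpos (by linarith)]
  ring

lemma g_mem {x : ℝ} (h : x ∈ Set.Icc (0:ℝ) 1) : g x ∈ Set.Icc (0:ℝ) 1 := by
  obtain ⟨h0, h1⟩ := h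
  rcases le_total x (1/2) with hx | hx
  · rw [g_low h0 hx]; constructor <;> linarith
  · rw [g_high hx h1]; constructor <;> linarith

noncomputable def hq (u : ℝ) : ℝ := u - u^2

lemma hq_mem {u : ℝ} (h : u ∈ Set.Icc (0:ℝ) 1) : hq u ∈ Set.Icc (0:ℝ) (1/4) := by
  obtain ⟨h0, h1⟩ := h
  constructor
  · have : 0 ≤ u * (1 - u) := mul_nonneg h0 (by linarith)
    simp only [hq]; nlinarith
  · simp only [hq]; nlinarith [sq_nonneg (u - 1/2)]

lemma hq_key {u : ℝ} (h : u ∈ Set.Icc (0:ℝ) 1) : 4 * hq u = g u + hq (g u) := by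
  obtain ⟨h0, h1⟩ := h
  rcases le_total u (1/2) with hx | hx
  · rw [g_low h0 hx]; simp only [hq]; ring
  · rw [g_high hx h1]; simp only [hq]; ring

lemma g_iter_mem {u : ℝ} (h : u ∈ Set.Icc (0:ℝ) 1) (s : ℕ) :
    g^[s] u ∈ Set.Icc (0:ℝ) 1 := by
  induction s with
  | zero => simpa using h
  | succ s ih => rw [Function.iterate_succ_apply']; exact g_mem ih

noncomputable def Tf : ℕ → ℝ → ℝ
  | 0, u => u
  | s+1, u => Tf s u - g^[s+1] u / 4^(s+1)

lemma Tf_eq {u : ℝ} (h : u ∈ Set.Icc (0:ℝ) 1) (s : ℕ) :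
    Tf s u = u^2 + hq (g^[s] u) / 4^s := by
  induction s with
  | zero => simp [Tf, hq]
  | succ s ih =>
      have hv := g_iter_mem h s
      have hkey := hq_key hv
      rw [Tf, ih, Function.iterate_succ_apply']
      have h5 : ((4:ℝ)^(s+1)) = 4 * 4^s := by ring
      have h4 : (4:ℝ)^s ≠ 0 := by positivity
      rw [h5]
      field_simp
      linear_combination hkey

lemma Tf_lb {u : ℝ} (h : u ∈ Set.Icc (0:ℝ) 1) (s : ℕ) : u^2 ≤ Tf s u := by
  rw [Tf_eq h s]
  have h1 := (hq_mem (g_iter_mem h s)).1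
  have h2 : (0:ℝ) < 4^s := by positivity
  have h3 := div_nonneg h1 (le_of_lt h2)
  linarith

lemma Tf_ub {u : ℝ} (h : u ∈ Set.Icc (0:ℝ) 1) (s : ℕ) :
    Tf s u ≤ u^2 + (1/4) / 4^s := by
  rw [Tf_eq h s]
  have h1 := (hq_mem (g_iter_mem h s)).2
  have h2 : (0:ℝ) < 4^s := by positivity
  gcongr

lemma Tf_le_self {u : ℝ} (h : u ∈ Set.Icc (0:ℝ) 1) (s : ℕ) : Tf s u ≤ u := by
  induction s with
  | zero => simp [Tf]
  | succ s ih =>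
      have hg := (g_iter_mem h (s+1)).1
      have h2 : (0:ℝ) < 4^(s+1) := by positivity
      have hnn : 0 ≤ g^[s+1] u / 4^(s+1) := div_nonneg hg (le_of_lt h2)
      rw [Tf]
      linarith

noncomputable def netT : ℕ → ℝ → ℝ
  | 0, u => u
  | s+1, u => relu (netT s u) - g (g^[s] u) / 4^(s+1)

lemma netT_eq {u : ℝ} (h : u ∈ Set.Icc (0:ℝ) 1) (s : ℕ) : netT s u = Tf s u := by
  induction s with
  | zero => rfl
  | succ s ih =>
      have hnn : 0 ≤ Tf s u := le_trans (sq_nonneg u) (Tf_lb h s)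
      rw [netT, ih, relu_of_nonneg hnn, Tf, Function.iterate_succ_apply']



/-! ### The two-input multiplication network -/

noncomputable def hstepF (k : ℕ) (z : Fin 4 → ℝ) : Fin 4 → ℝ :=
  ![g (z 0), relu (z 1) - g (z 0) / 4^k, g (z 2), relu (z 3) - g (z 2) / 4^k]

section consSimps
open Matrix
variable {α : Type*}
@[simp] lemma cv8_5 (a : α) (u : Fin 7 → α) :
    Matrix.vecCons a u (5:Fin 8) = vecHead (vecTail (vecTail (vecTail (vecTail u)))) := rfl
@[simp] lemma cv8_6 (a : α) (u : Fin 7 → α) :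
    Matrix.vecCons a u (6:Fin 8) = vecHead (vecTail (vecTail (vecTail (vecTail (vecTail u))))) := rfl
@[simp] lemma cv8_7 (a : α) (u : Fin 7 → α) :
    Matrix.vecCons a u (7:Fin 8) = vecHead (vecTail (vecTail (vecTail (vecTail (vecTail (vecTail u)))))) := rfl
@[simp] lemma fsucc2 : (Fin.succ (2:Fin 3)) = (3 : Fin 4) := rfl
end consSimps

lemma hstep_rvec (k : ℕ) : RVec 4 4 8 1 (hstepF k) := by
  set C : Matrix (Fin 4) (Fin 8) ℝ := !![(2:ℝ),-4,2,0,0,0,0,0; -(2/4^k),4/4^k,-(2/4^k),1,0,0,0,0;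
      0,0,0,0,2,-4,2,0; 0,0,0,0,-(2/4^k),4/4^k,-(2/4^k),1] with hC
  refine ⟨!![1,0,0,0; 1,0,0,0; 1,0,0,0; 0,1,0,0; 0,0,1,0; 0,0,1,0; 0,0,1,0; 0,0,0,1],
    ![0,-(1/2),-1,0,0,-(1/2),-1,0],
    fun y => C.mulVec y,
    ⟨C, 0, fun y => (add_zero _).symm⟩, fun x => ?_⟩
  have hlay : (fun i => relu ((!![1,0,0,0; 1,0,0,0; 1,0,0,0; 0,1,0,0;
        0,0,1,0; 0,0,1,0; 0,0,1,0; 0,0,0,1]).mulVec x i + ![0,-(1/2),-1,0,0,-(1/2),-1,0] i))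
      = ![relu (x 0), relu (x 0 + -(1/2)), relu (x 0 + -1), relu (x 1),
          relu (x 2), relu (x 2 + -(1/2)), relu (x 2 + -1), relu (x 3)] := by
    funext i
    fin_cases i <;>
      simp [Matrix.cons_mulVec, Matrix.cons_dotProduct, Matrix.dotProduct_of_isEmpty,
        Matrix.empty_mulVec, Matrix.vecHead, Matrix.vecTail, Matrix.cons_val_two,
        Matrix.cons_val_three, Matrix.cons_val_four]
  rw [hlay]
  funext i
  fin_cases i <;>
    simp [hstepF, g, hC, Matrix.cons_mulVec, Matrix.cons_dotProduct, Matrix.dotProduct_of_isEmpty,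
      Matrix.empty_mulVec, Matrix.vecHead, Matrix.vecTail, Matrix.cons_val_two,
      Matrix.cons_val_three, Matrix.cons_val_four, sub_eq_add_neg] <;> ring

noncomputable def prepF (x : Fin 2 → ℝ) : Fin 4 → ℝ :=
  ![relu ((x 0 + x 1)/2), relu ((x 0 + x 1)/2),
    relu ((x 0 - x 1)/2) + relu ((x 1 - x 0)/2), relu ((x 0 - x 1)/2) + relu ((x 1 - x 0)/2)]

lemma prep_rvec : RVec 2 4 3 1 prepF := by
  set C : Matrix (Fin 4) (Fin 3) ℝ := !![(1:ℝ),0,0; 1,0,0; 0,1,1; 0,1,1] with hC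
  refine ⟨!![1/2,1/2; 1/2,-(1/2); -(1/2),1/2], 0,
    fun y => C.mulVec y,
    ⟨C, 0, fun y => (add_zero _).symm⟩, fun x => ?_⟩
  have hlay : (fun i => relu ((!![1/2,1/2; 1/2,-(1/2); -(1/2),1/2] : Matrix (Fin 3) (Fin 2) ℝ).mulVec x i
        + (0 : Fin 3 → ℝ) i))
      = ![relu ((x 0 + x 1)/2), relu ((x 0 - x 1)/2), relu ((x 1 - x 0)/2)] := by
    funext i
    fin_cases i <;>
      simp [Matrix.cons_mulVec, Matrix.cons_dotProduct, Matrix.dotProduct_of_isEmpty,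
        Matrix.empty_mulVec, Matrix.vecHead, Matrix.vecTail, Matrix.cons_val_two,
        Matrix.cons_val_three, Matrix.cons_val_four] <;> ring_nf
  rw [hlay]
  funext i
  fin_cases i <;>
    simp [prepF, hC, Matrix.cons_mulVec, Matrix.cons_dotProduct, Matrix.dotProduct_of_isEmpty,
      Matrix.empty_mulVec, Matrix.vecHead, Matrix.vecTail, Matrix.cons_val_two,
      Matrix.cons_val_three, Matrix.cons_val_four]

noncomputable def clipF (y : Fin 4 → ℝ) : Fin 1 → ℝ := ![relu (y 1 - y 3)]

lemma clip_rvec : RVec 4 1 1 1 clipF := by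
  refine ⟨!![0,1,0,-1], ![0], fun y => y, ⟨1, 0, fun y => by simp [Matrix.one_mulVec]⟩,
    fun x => ?_⟩
  funext i
  fin_cases i
  simp [clipF, Matrix.cons_mulVec, Matrix.cons_dotProduct, Matrix.dotProduct_of_isEmpty,
    Matrix.empty_mulVec, Matrix.vecHead, Matrix.vecTail, Matrix.cons_val_two,
    Matrix.cons_val_three, Matrix.cons_val_four, sub_eq_add_neg]

noncomputable def hatChainF : ℕ → (Fin 4 → ℝ) → (Fin 4 → ℝ)
  | 0 => id
  | s+1 => fun y => hstepF (s+1) (hatChainF s y)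

lemma hatChain_rvec (s : ℕ) : RVec 4 4 8 s (hatChainF s) := by
  induction s with
  | zero => exact ⟨1, 0, fun x => by simp [Matrix.one_mulVec, hatChainF]⟩
  | succ s ih =>
      have h := ih.comp (hstep_rvec (s+1))
      rw [show s + 1 = s + 1 from rfl]
      exact h.congr (fun x => rfl)

lemma hatChain_eval (s : ℕ) (u v : ℝ) :
    hatChainF s ![u, u, v, v] = ![g^[s] u, netT s u, g^[s] v, netT s v] := by
  induction s with
  | zero =>
      funext i
      fin_cases i <;> simp [hatChainF, netT]
  | succ s ih =>
      show hstepF (s+1) (hatChainF s ![u, u, v, v]) = _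
      rw [ih]
      funext i
      fin_cases i <;>
        simp [hstepF, netT, Function.iterate_succ_apply']

noncomputable def pairF (m : ℕ) : (Fin 2 → ℝ) → (Fin 1 → ℝ) :=
  fun x => reluV (clipF (hatChainF m (prepF x)))

lemma pair_rvec (m : ℕ) : RVec 2 1 8 (m+5) (pairF m) := by
  have h1 := prep_rvec.mono (by norm_num : 3 ≤ 8)
  have h2 := hatChain_rvec m
  have h3 := clip_rvec.mono (by norm_num : 1 ≤ 8)
  have h4 := (RVec.reluId 1 3 (by norm_num)).mono (by norm_num : 1 ≤ 8)
  have h := ((h1.comp h2).comp h3).comp h4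
  have hd : 1 + m + 1 + 3 = m + 5 := by omega
  rw [hd] at h
  exact h.congr (fun x => rfl)

lemma pair_eval (m : ℕ) (w : Fin 2 → ℝ) :
    pairF m w 0 = relu (relu (netT m (relu ((w 0 + w 1)/2))
      - netT m (relu ((w 0 - w 1)/2) + relu ((w 1 - w 0)/2)))) := by
  show reluV (clipF (hatChainF m (prepF w))) 0 = _
  rw [show prepF w = ![relu ((w 0 + w 1)/2), relu ((w 0 + w 1)/2),
    relu ((w 0 - w 1)/2) + relu ((w 1 - w 0)/2),
    relu ((w 0 - w 1)/2) + relu ((w 1 - w 0)/2)] from rfl, hatChain_eval]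
  simp [clipF, reluV]

lemma pair_sem (m : ℕ) (w : Fin 2 → ℝ) (h0 : w 0 ∈ Set.Icc (0:ℝ) 1)
    (h1 : w 1 ∈ Set.Icc (0:ℝ) 1) :
    pairF m w 0 ∈ Set.Icc (0:ℝ) 1 ∧ |pairF m w 0 - w 0 * w 1| ≤ (1/4)/4^m := by
  obtain ⟨h00, h01⟩ := h0
  obtain ⟨h10, h11⟩ := h1
  set p := relu ((w 0 + w 1)/2) with hp_def
  set q := relu ((w 0 - w 1)/2) + relu ((w 1 - w 0)/2) with hq_def
  have hp : p = (w 0 + w 1)/2 := relu_of_nonneg (by linarith)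
  have hpI : p ∈ Set.Icc (0:ℝ) 1 := by rw [hp]; constructor <;> linarith
  have hqI : q ∈ Set.Icc (0:ℝ) 1 ∧ q^2 = (w 0 - w 1)^2/4 := by
    rcases le_total (w 1) (w 0) with hc | hc
    · have e1 : relu ((w 0 - w 1)/2) = (w 0 - w 1)/2 := relu_of_nonneg (by linarith)
      have e2 : relu ((w 1 - w 0)/2) = 0 := relu_of_nonpos (by linarith)
      rw [hq_def, e1, e2]
      refine ⟨⟨by linarith, by linarith⟩, by ring⟩
    · have e1 : relu ((w 0 - w 1)/2) = 0 := relu_of_nonpos (by linarith)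
      have e2 : relu ((w 1 - w 0)/2) = (w 1 - w 0)/2 := relu_of_nonneg (by linarith)
      rw [hq_def, e1, e2]
      refine ⟨⟨by linarith, by linarith⟩, by ring⟩
  obtain ⟨hqI1, hqsq⟩ := hqI
  have hpq : p^2 - q^2 = w 0 * w 1 := by rw [hp, hqsq]; ring
  rw [pair_eval, relu_relu]
  have hTp := Tf_eq hpI m
  have hTq := Tf_eq hqI1 m
  rw [netT_eq hpI m, netT_eq hqI1 m]
  set a := hq (g^[m] p) with ha_def
  set b := hq (g^[m] q) with hb_def
  have haI := hq_mem (g_iter_mem hpI m)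
  have hbI := hq_mem (g_iter_mem hqI1 m)
  have h4pos : (0:ℝ) < 4^m := by positivity
  set D := Tf m p - Tf m q with hD_def
  have hDval : D - w 0 * w 1 = (a - b)/4^m := by
    rw [hD_def, hTp, hTq, ← hpq]; ring
  have hDle : D ≤ 1 := by
    have := Tf_le_self hpI m
    have := Tf_lb hqI1 m
    have := sq_nonneg q
    rw [hD_def]
    linarith
  have herr : |D - w 0 * w 1| ≤ (1/4)/4^m := by
    rw [hDval, abs_div, abs_of_pos h4pos]
    have : |a - b| ≤ 1/4 := by
      rw [abs_le]
      constructor <;> [linarith [haI.1, hbI.2]; linarith [haI.2, hbI.1]]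
    gcongr
  constructor
  · constructor
    · exact relu_nonneg _
    · exact max_le hDle (by norm_num)
  · have := abs_relu_sub_le (a := D) (mul_nonneg h00 h10)
    linarith [herr]



/-! ### The binary tree of multiplications -/

lemma append11_zero (u v : Fin 1 → ℝ) : Fin.append u v (0 : Fin 2) = u 0 := by
  have h : (0 : Fin 2) = Fin.castAdd 1 (0 : Fin 1) := rfl
  rw [h, Fin.append_left]

lemma append11_one (u v : Fin 1 → ℝ) : Fin.append u v (1 : Fin 2) = v 0 := by
  have h : (1 : Fin 2) = Fin.natAdd 1 (0 : Fin 1) := rfl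
  rw [h, Fin.append_right]

lemma tree (m : ℕ) : ∀ n, 1 ≤ n → ∃ F, RVec n 1 (6*n - 4) ((m+5) * Nat.clog 2 n) F ∧
    ∀ x : Fin n → ℝ, (∀ j, x j ∈ Set.Icc (0:ℝ) 1) →
      F x 0 ∈ Set.Icc (0:ℝ) 1 ∧ |F x 0 - ∏ j, x j| ≤ ((n:ℝ) - 1) * ((1/4)/4^m) := by
  intro n
  induction n using Nat.strong_induction_on with
  | _ n ih =>
  intro hn
  rcases eq_or_lt_of_le hn with h1 | h2
  · -- n = 1 : the identity (affine) network
    subst h1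
    refine ⟨id, ?_, ?_⟩
    · rw [Nat.clog_one_right, Nat.mul_zero]
      exact ⟨1, 0, fun x => by simp [Matrix.one_mulVec]⟩
    · intro x hx
      refine ⟨hx 0, ?_⟩
      have hp : ∏ j : Fin 1, x j = x 0 := Fin.prod_univ_one x
      rw [hp]
      simp
  · -- 2 ≤ n
    have h2' : 2 ≤ n := h2
    set a := (n+1)/2 with ha_def
    set b := n/2 with hb_def
    have hab : a + b = n := by omega
    have ha1 : 1 ≤ a := by omega
    have hb1 : 1 ≤ b := by omega
    have han : a < n := by omega
    have hbn : b < n := by omega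
    obtain ⟨F1, hF1, hS1⟩ := ih a han ha1
    obtain ⟨F2, hF2, hS2⟩ := ih b hbn hb1
    have hclog : Nat.clog 2 n = Nat.clog 2 a + 1 := by
      rw [Nat.clog_of_two_le (by norm_num) h2']
      congr 2
    have hd2 : (m+5) * Nat.clog 2 b ≤ (m+5) * Nat.clog 2 a :=
      Nat.mul_le_mul_left _ (Nat.clog_mono_right _ (by omega))
    obtain ⟨F2', hF2', hF2eq⟩ := hF2.pad hd2 (by omega : 1 ≤ 6*b - 4)
    have hpar := hF1.par hF2'
    have hsel := hpar.select (Fin.cast hab)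
    have hw : (6*a-4) + (6*b-4) ≤ 6*n-4 := by omega
    have hsel' := hsel.mono hw
    have hpair := (pair_rvec m).mono (by omega : 8 ≤ 6*n-4)
    have hcomp := hsel'.comp hpair
    have hdep : (m+5) * Nat.clog 2 a + (m+5) = (m+5) * Nat.clog 2 n := by rw [hclog]; ring
    rw [hdep] at hcomp
    refine ⟨_, hcomp, ?_⟩
    intro x hx
    set z : Fin (a+b) → ℝ := fun j => x (Fin.cast hab j) with hz
    have hz1 : ∀ j, z j ∈ Set.Icc (0:ℝ) 1 := fun j => hx _
    set za : Fin a → ℝ := fun j => z (Fin.castAdd b j) with hza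
    set zb : Fin b → ℝ := fun j => z (Fin.natAdd a j) with hzb
    obtain ⟨hy1I, hy1err⟩ := hS1 za (fun j => hz1 _)
    obtain ⟨hy2I, hy2err⟩ := hS2 zb (fun j => hz1 _)
    have hF2'eq : F2' zb = F2 zb := hF2eq zb (fun i => by
      have h0 := hy2I.1
      have : i = 0 := Subsingleton.elim i 0
      rw [this]
      exact h0)
    set w : Fin 2 → ℝ := parF F1 F2' z with hwdef
    have hw0 : w 0 = F1 za 0 := append11_zero _ _
    have hw1 : w 1 = F2 zb 0 := by
      have h' : w 1 = F2' zb 0 := append11_one _ _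
      rw [h', hF2'eq]
    have hw0I : w 0 ∈ Set.Icc (0:ℝ) 1 := by rw [hw0]; exact hy1I
    have hw1I : w 1 ∈ Set.Icc (0:ℝ) 1 := by rw [hw1]; exact hy2I
    obtain ⟨hPI, hPerr⟩ := pair_sem m w hw0I hw1I
    set P1 := ∏ j, za j with hP1
    set P2 := ∏ j, zb j with hP2
    have hprod : ∏ j, x j = P1 * P2 := by
      have e1 : ∏ j, x j = ∏ j : Fin (a+b), z j := by
        rw [hz]
        exact (Fintype.prod_equiv (finCongr hab) _ _ (fun j => rfl)).symm
      rw [e1, Fin.prod_univ_add]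
    have hP1I : P1 ∈ Set.Icc (0:ℝ) 1 := by
      constructor
      · exact Finset.prod_nonneg (fun j _ => (hz1 _).1)
      · exact Finset.prod_le_one (fun j _ => (hz1 _).1) (fun j _ => (hz1 _).2)
    have hP2I : P2 ∈ Set.Icc (0:ℝ) 1 := by
      constructor
      · exact Finset.prod_nonneg (fun j _ => (hz1 _).1)
      · exact Finset.prod_le_one (fun j _ => (hz1 _).1) (fun j _ => (hz1 _).2)
    set ε := ((1:ℝ)/4)/4^m with hε_def
    have hε : 0 ≤ ε := by positivity
    refine ⟨hPI, ?_⟩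
    have key : |w 0 * w 1 - P1 * P2| ≤ ((a:ℝ)-1)*ε + ((b:ℝ)-1)*ε := by
      have e : w 0 * w 1 - P1*P2 = (w 0 - P1)*(w 1) + P1*(w 1 - P2) := by ring
      rw [e]
      have t1 : |(w 0 - P1)*(w 1)| ≤ ((a:ℝ)-1)*ε := by
        rw [abs_mul]
        have hb1' : |w 1| ≤ 1 := abs_le.mpr ⟨by linarith [hw1I.1], hw1I.2⟩
        have h1 : |w 0 - P1| ≤ ((a:ℝ)-1)*ε := by rw [hw0]; exact hy1err
        have h2 : (0:ℝ) ≤ |w 0 - P1| := abs_nonneg _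
        calc |w 0 - P1| * |w 1| ≤ |w 0 - P1| * 1 := by
              exact mul_le_mul_of_nonneg_left hb1' h2
          _ = |w 0 - P1| := mul_one _
          _ ≤ ((a:ℝ)-1)*ε := h1
      have t2 : |P1*(w 1 - P2)| ≤ ((b:ℝ)-1)*ε := by
        rw [abs_mul]
        have hb1' : |P1| ≤ 1 := abs_le.mpr ⟨by linarith [hP1I.1], hP1I.2⟩
        have h1 : |w 1 - P2| ≤ ((b:ℝ)-1)*ε := by rw [hw1]; exact hy2err
        have h2 : (0:ℝ) ≤ |w 1 - P2| := abs_nonneg _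
        calc |P1| * |w 1 - P2| ≤ 1 * |w 1 - P2| := mul_le_mul_of_nonneg_right hb1' h2
          _ = |w 1 - P2| := one_mul _
          _ ≤ ((b:ℝ)-1)*ε := h1
      calc |(w 0 - P1)*(w 1) + P1*(w 1 - P2)| ≤ |(w 0 - P1)*(w 1)| + |P1*(w 1 - P2)| :=
            abs_add_le _ _
        _ ≤ ((a:ℝ)-1)*ε + ((b:ℝ)-1)*ε := add_le_add t1 t2
    have hcast : ((a:ℝ) + (b:ℝ)) = (n:ℝ) := by exact_mod_cast congrArg (Nat.cast : ℕ → ℝ) hab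
    have hsum : ε + (((a:ℝ)-1)*ε + ((b:ℝ)-1)*ε) = ((n:ℝ)-1)*ε := by
      rw [← hcast]; ring
    calc |pairF m w 0 - ∏ j, x j|
        = |(pairF m w 0 - w 0 * w 1) + (w 0 * w 1 - P1 * P2)| := by rw [hprod]; ring_nf
      _ ≤ |pairF m w 0 - w 0 * w 1| + |w 0 * w 1 - P1 * P2| := abs_add_le _ _
      _ ≤ ε + (((a:ℝ)-1)*ε + ((b:ℝ)-1)*ε) := add_le_add hPerr key
      _ = ((n:ℝ)-1)*ε := hsum

end SH

/-- **Lemma 4 (Schmidt-Hieber, Lemma A3).** There is a ReLU network `Mult` with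
`(m+5)⌈log₂ r⌉` hidden layers, each of width `6r`, approximating the product of `r`
numbers on `[0,1]^r` with error at most `3^r · 2^{-m}`. -/
theorem approximate_multiplication_network (r m : ℕ) (hr : 2 ≤ r) (hm : 1 ≤ m) :
    ∃ Mult : (Fin r → ℝ) → ℝ,
      RealizedByReluNet r (List.replicate ((m + 5) * Nat.clog 2 r) (6 * r)) Mult ∧
      ∀ x : Fin r → ℝ, (∀ j, x j ∈ Set.Icc (0 : ℝ) 1) →
        |Mult x - ∏ j, x j| ≤ 3 ^ r / 2 ^ m := by
  obtain ⟨F, hF, hS⟩ := SH.tree m r (by omega)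
  refine ⟨fun x => F x 0, (hF.mono (by omega : 6*r - 4 ≤ 6*r)).toScalar, ?_⟩
  intro x hx
  obtain ⟨_, herr⟩ := hS x hx
  refine le_trans herr ?_
  have h1 : ((r:ℝ) - 1) ≤ 3^r := by
    have hr2 : (r:ℝ) ≤ 2^r := by exact_mod_cast (Nat.lt_two_pow_self (n := r)).le
    have hr3 : (2:ℝ)^r ≤ 3^r := pow_le_pow_left₀ (by norm_num) (by norm_num) r
    linarith
  have h2 : ((1:ℝ)/4)/4^m ≤ 1/2^m := by
    rw [div_le_div_iff₀ (by positivity) (by positivity)]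
    have hle : (2:ℝ)^m ≤ 4^m := pow_le_pow_left₀ (by norm_num) (by norm_num) m
    have hp : (0:ℝ) ≤ 2^m := by positivity
    linarith
  have h3 : (0:ℝ) ≤ ((1:ℝ)/4)/4^m := by positivity
  have h4 : (0:ℝ) ≤ (r:ℝ) - 1 := by
    have : (2:ℝ) ≤ (r:ℝ) := by exact_mod_cast hr
    linarith
  calc ((r:ℝ) - 1) * (((1:ℝ)/4)/4^m) ≤ 3^r * (1/2^m) :=
        mul_le_mul h1 h2 h3 (by positivity)
    _ = 3^r / 2^m := by rw [mul_one_div]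
end
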